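/- Let points p_0, p_1, ..., p_k in the Euclidean plane lie consecutively along an axis-parallel L-shaped path (a horizontal segment followed by a vertical segment, with at most one bend), with consecutive points at Euclidean distance exactly 1 and the bend occurring at one of the points. Then for any indices i, j with |i - j| ≥ 2, the Euclidean distance between p_i and p_j is at least √2, and in particular greater than 1. -/
import Mathlib


/-- Points at unit spacing along an axis-parallel L-shaped path (horizontal then
vertical, with at most one bend): any two points with index difference at least 2
are at Euclidean distance at least √2 > 1. -/
theorem stmt1 (k b : ℕ) (hb : b ≤ k) (x0 y0 : ℝ) (p : ℕ → ℝ × ℝ)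
    (hhor : ∀ i ≤ b, p i = (x0 + i, y0))
    (hver : ∀ i, b ≤ i → i ≤ k → p i = (x0 + b, y0 + (i - b : ℕ)))
    (i j : ℕ) (hi : i ≤ k) (hj : j ≤ k) (hij : 2 ≤ |(i : ℤ) - j|) :
    Real.sqrt (((p i).1 - (p j).1) ^ 2 + ((p i).2 - (p j).2) ^ 2) ≥ Real.sqrt 2 ∧
    Real.sqrt (((p i).1 - (p j).1) ^ 2 + ((p i).2 - (p j).2) ^ 2) > 1 := by
  have hij' : (2 : ℝ) ≤ |(i : ℝ) - j| := by
    have := (Int.cast_le (R := ℝ)).mpr hij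
    push_cast at this
    linarith
  have key : ((p i).1 - (p j).1) ^ 2 + ((p i).2 - (p j).2) ^ 2 ≥ 2 := by
    rcases le_or_gt i b with hib | hib <;> rcases le_or_gt j b with hjb | hjb
    · rw [hhor i hib, hhor j hjb]
      simp only
      have h4 : ((i : ℝ) - j) ^ 2 ≥ 4 := by
        nlinarith [sq_abs ((i : ℝ) - j), hij']
      nlinarith
    · -- i on horizontal, j on vertical
      rw [hhor i hib, hver j hjb.le hj]
      simp only
      rw [Nat.cast_sub hjb.le]
      have hib' : (i : ℝ) ≤ b := by exact_mod_cast hib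
      have hjb' : (b : ℝ) ≤ j := by exact_mod_cast hjb.le
      have hji : (2 : ℝ) ≤ (j : ℝ) - i := by
        rw [abs_sub_comm, abs_of_nonneg (by linarith)] at hij'
        linarith
      nlinarith [sq_nonneg (((b : ℝ) - i) - ((j : ℝ) - b))]
    · -- i on vertical, j on horizontal
      rw [hver i hib.le hi, hhor j hjb]
      simp only
      rw [Nat.cast_sub hib.le]
      have hjb' : (j : ℝ) ≤ b := by exact_mod_cast hjb
      have hib' : (b : ℝ) ≤ i := by exact_mod_cast hib.le
      have hji : (2 : ℝ) ≤ (i : ℝ) - j := by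
        rw [abs_of_nonneg (by linarith)] at hij'
        linarith
      nlinarith [sq_nonneg (((b : ℝ) - j) - ((i : ℝ) - b))]
    · rw [hver i hib.le hi, hver j hjb.le hj]
      simp only
      rw [Nat.cast_sub hib.le, Nat.cast_sub hjb.le]
      have h4 : ((i : ℝ) - j) ^ 2 ≥ 4 := by
        nlinarith [sq_abs ((i : ℝ) - j), hij']
      nlinarith
  have hmono : Real.sqrt 2 ≤ Real.sqrt (((p i).1 - (p j).1) ^ 2 + ((p i).2 - (p j).2) ^ 2) :=
    Real.sqrt_le_sqrt key
  have h1 : (1 : ℝ) < Real.sqrt 2 := by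
    nlinarith [Real.sq_sqrt (by norm_num : (2:ℝ) ≥ 0), Real.sqrt_nonneg 2]
  exact ⟨hmono, lt_of_lt_of_le h1 hmono⟩
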